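/- Let λ, v_i, v_{i'} ∈ ℝʳ and ρ, η > 0. The pair (c, c') minimizing η‖c - c'‖₂ + (ρ/2)‖a - c‖₂² + (ρ/2)‖b - c'‖₂² over (c, c') ∈ ℝʳ × ℝʳ is given by c = ω a + (1-ω) b and c' = (1-ω) a + ω b, where ω = max{1 - η/(ρ‖a - b‖₂), 1/2} (and c = c' = (a+b)/2 when a = b). -/

import Mathlib

private lemma key_scalar (ρ η D t N : ℝ) (hρ : 0 < ρ) (hη : 0 < η) (hD : 0 ≤ D)
    (ht : 0 ≤ t) (hN1 : D - t ≤ N) (hN0 : 0 ≤ N)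
    (ω : ℝ) (hω : ω = max (1 - η / (ρ * D)) (1 / 2)) :
    η * ((2 * ω - 1) * D) + ρ * ((1 - ω) * D) ^ 2 ≤ η * N + (ρ / 4) * t ^ 2 := by
  rcases eq_or_lt_of_le hD with hD0 | hDpos
  · -- D = 0
    have : D = 0 := hD0.symm
    subst this
    have hLHS : η * ((2 * ω - 1) * 0) + ρ * ((1 - ω) * 0) ^ 2 = 0 := by ring
    rw [hLHS]
    have h1 : 0 ≤ η * N := mul_nonneg hη.le hN0
    nlinarith [sq_nonneg t]
  · have hρD : 0 < ρ * D := mul_pos hρ hDpos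
    rcases le_total (ρ * D) (2 * η) with hcase | hcase
    · -- small gap: ω = 1/2
      have h12 : (1:ℝ)/2 ≤ η / (ρ * D) := by
        rw [le_div_iff₀ hρD]; linarith
      have hωval : ω = 1/2 := by
        rw [hω, max_eq_right]; linarith
      subst hωval
      rcases le_total t D with htD | htD
      · have hρt : ρ * t ≤ ρ * D := mul_le_mul_of_nonneg_left htD hρ.le
        nlinarith [mul_nonneg (sub_nonneg.2 htD) (by nlinarith : (0:ℝ) ≤ 4*η - ρ*(D+t)),
          mul_le_mul_of_nonneg_left hN1 hη.le]

      · nlinarith [mul_nonneg hη.le hN0, mul_le_mul htD htD hD ht, hρ.le]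
    · -- large gap: ω = 1 - η/(ρD)
      have h12 : η / (ρ * D) ≤ (1:ℝ)/2 := by
        rw [div_le_iff₀ hρD]; linarith
      have hωval : ω = 1 - η / (ρ * D) := by
        rw [hω, max_eq_left]; linarith
      have hA : ρ * D * (1 - ω) = η := by
        rw [hωval]; field_simp; ring
      have h1 : ρ * ((1 - ω) * D) ^ 2 = η * ((1 - ω) * D) := by
        calc ρ * ((1 - ω) * D) ^ 2 = (ρ * D * (1 - ω)) * ((1 - ω) * D) := by ring
          _ = η * ((1 - ω) * D) := by rw [hA]
      have h2 : η * ((1 - ω) * D) * ρ = η * η := by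
        calc η * ((1 - ω) * D) * ρ = η * (ρ * D * (1 - ω)) := by ring
          _ = η * η := by rw [hA]
      rw [h1]
      rcases le_total t D with htD | htD
      · nlinarith [sq_nonneg (ρ * t - 2 * η), mul_le_mul_of_nonneg_left hN1
          (mul_pos hρ hη).le, h2]
      · have h3 : η * ω * D * ρ = η * ρ * D - η * η := by linear_combination -h2
        have h4 : ρ^2 * D^2 ≤ ρ^2 * t^2 := by nlinarith [mul_le_mul htD htD hD ht]
        nlinarith [h3, h4, sq_nonneg (ρ * D - 2 * η),
          mul_nonneg (mul_nonneg hρ.le hη.le) hN0]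

theorem stmt_11 (r : ℕ) (a b : EuclideanSpace ℝ (Fin r)) (ρ η : ℝ)
    (hρ : 0 < ρ) (hη : 0 < η)
    (ω : ℝ) (hω : ω = max (1 - η / (ρ * ‖a - b‖)) (1 / 2)) :
    ∀ c c' : EuclideanSpace ℝ (Fin r),
      η * ‖(ω • a + (1 - ω) • b) - ((1 - ω) • a + ω • b)‖
          + (ρ / 2) * ‖a - (ω • a + (1 - ω) • b)‖ ^ 2
          + (ρ / 2) * ‖b - ((1 - ω) • a + ω • b)‖ ^ 2
        ≤ η * ‖c - c'‖ + (ρ / 2) * ‖a - c‖ ^ 2 + (ρ / 2) * ‖b - c'‖ ^ 2 := by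
  intro c c'
  set D : ℝ := ‖a - b‖ with hDdef
  have hD : (0:ℝ) ≤ D := norm_nonneg _
  -- bounds on ω
  have hω2 : (1:ℝ)/2 ≤ ω := hω ▸ le_max_right _ _
  have hω1 : ω ≤ 1 := by
    rw [hω]
    have : (0:ℝ) ≤ η / (ρ * D) := div_nonneg hη.le (mul_nonneg hρ.le hD)
    apply max_le <;> linarith
  -- compute the norms on the LHS
  have e1 : (ω • a + (1 - ω) • b) - ((1 - ω) • a + ω • b) = (2*ω - 1) • (a - b) := by
    module
  have e2 : a - (ω • a + (1 - ω) • b) = (1 - ω) • (a - b) := by module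
  have e3 : b - ((1 - ω) • a + ω • b) = (1 - ω) • (b - a) := by module
  have n1 : ‖(ω • a + (1 - ω) • b) - ((1 - ω) • a + ω • b)‖ = (2*ω - 1) * D := by
    rw [e1, norm_smul, Real.norm_eq_abs, abs_of_nonneg (by linarith : (0:ℝ) ≤ 2*ω - 1)]
  have n2 : ‖a - (ω • a + (1 - ω) • b)‖ = (1 - ω) * D := by
    rw [e2, norm_smul, Real.norm_eq_abs, abs_of_nonneg (by linarith : (0:ℝ) ≤ 1 - ω)]
  have n3 : ‖b - ((1 - ω) • a + ω • b)‖ = (1 - ω) * D := by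
    rw [e3, norm_smul, Real.norm_eq_abs, abs_of_nonneg (by linarith : (0:ℝ) ≤ 1 - ω),
      norm_sub_rev]
  rw [n1, n2, n3]
  -- RHS lower bounds
  set t : ℝ := ‖(a - c) - (b - c')‖ with htdef
  have ht : (0:ℝ) ≤ t := norm_nonneg _
  have hsum : t ^ 2 ≤ 2 * (‖a - c‖ ^ 2 + ‖b - c'‖ ^ 2) := by
    have h := norm_sub_le (a - c) (b - c')
    nlinarith [sq_nonneg (‖a - c‖ - ‖b - c'‖), norm_nonneg (a - c), norm_nonneg (b - c')]
  have hN1 : D - t ≤ ‖c - c'‖ := by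
    have hab : a - b = (c - c') + ((a - c) - (b - c')) := by module
    have := norm_add_le (c - c') ((a - c) - (b - c'))
    rw [← hab] at this
    linarith
  have hN0 : (0:ℝ) ≤ ‖c - c'‖ := norm_nonneg _
  have key := key_scalar ρ η D t ‖c - c'‖ hρ hη hD ht hN1 hN0 ω hω
  nlinarith [mul_le_mul_of_nonneg_left hsum (by positivity : (0:ℝ) ≤ ρ/4)]
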